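/- arXiv:1406.6514 — 2 statements merged into one kernel-verified Lean document; each statement's English description precedes it below -/
import Mathlib

section
/- Under conditions (C.1)–(C.2), for the generalized tapering estimator with parameter $1 \le \tau \le p$ and generalized SURE constant $2 \le C_n = o(n)$, there exists a constant $C_0$ such that the risk $R_c(\tau) = \mathbb{E}[\mathrm{SURE}_c(\tau)]$ satisfies $R_c(\tau) \ge \frac{1}{C_0}\cdot \frac{p\,\tau\, C_n}{n}$, where the lower bound uses that $\sigma_{ii} \ge c > 0$ for all $i$; consequently $\sqrt{\mathrm{Var}_n(\tau)}/R_c(\tau) \le C \max\big(\frac{1}{\tau C_n}, \frac{1}{\sqrt{np}}\big)$ given the upper bound $\mathrm{Var}_n(\tau) \le C(\frac{p^2}{n^2} + \frac{C_n^2 p \tau^2}{n^3} + \frac{C_n p \tau}{n^2})$. -/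
open Finset

noncomputable section

/-- The risk `R_c(τ) = 𝔼[SURE_c(τ)]` of a generalized tapering estimator with
weights `w`, written via the Gaussian moment formulas
`𝔼 σ̂_ij² = n(n-1)/n² σ_ij² + (n-1)/n² σ_ii σ_jj` and
`𝔼 σ̂_ii σ̂_jj = (n-1)²/n² σ_ii σ_jj + 2(n-1)/n² σ_ij²`. -/
def Rc (p n : ℕ) (Cn : ℝ) (w : Fin p → Fin p → ℝ)
    (S : Matrix (Fin p) (Fin p) ℝ) : ℝ :=
  let nn : ℝ := n
  let an := nn * (nn - 3) / ((nn - 1) * (nn - 2) * (nn + 1))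
  let bn := nn / ((nn + 1) * (nn - 2))
  ∑ i : Fin p, ∑ j : Fin p,
    (((nn / (nn - 1) - w i j) ^ 2 + an * (Cn * w i j - nn / (nn - 1)))
        * (nn * (nn - 1) / nn ^ 2 * S i j ^ 2
            + (nn - 1) / nn ^ 2 * (S i i * S j j))
      + bn * (Cn * w i j - nn / (nn - 1))
        * ((nn - 1) ^ 2 / nn ^ 2 * (S i i * S j j)
            + 2 * (nn - 1) / nn ^ 2 * S i j ^ 2))


lemma aux_cs (nn Cnv wv : ℝ) (hn : 3 ≤ nn) (hCn : 2 ≤ Cnv)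
    (hw0 : 0 ≤ wv) (hw1 : wv ≤ 1) :
    0 ≤ (nn - 1) / nn * (nn / (nn - 1) - wv) ^ 2 + (Cnv * wv - nn / (nn - 1)) / nn := by
  have h0 : (0:ℝ) < nn := by linarith
  have h1 : (0:ℝ) < nn - 1 := by linarith
  have hid : (nn - 1) / nn * (nn / (nn - 1) - wv) ^ 2 + (Cnv * wv - nn / (nn - 1)) / nn
      = ((nn - (nn - 1) * wv) ^ 2 + (nn - 1) * (Cnv * wv) - nn) / (nn * (nn - 1)) := by
    field_simp
    ring
  rw [hid]
  apply div_nonneg _ (by positivity)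
  nlinarith [sq_nonneg (wv - 1), mul_nonneg (by linarith : (0:ℝ) ≤ Cnv - 2) hw0,
    mul_nonneg (mul_nonneg (by linarith : (0:ℝ) ≤ Cnv - 2) hw0) h1.le]

lemma term_ge (nn Cnv wv s2 d : ℝ) (hn : 3 ≤ nn) (hCn : 2 ≤ Cnv)
    (hw0 : 0 ≤ wv) (hw1 : wv ≤ 1) (hs2 : 0 ≤ s2) (hd : 0 ≤ d) :
    ((nn - 1) / nn ^ 2 * wv ^ 2 + (Cnv - 2) * wv / nn) * d ≤
      ((nn / (nn - 1) - wv) ^ 2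
          + nn * (nn - 3) / ((nn - 1) * (nn - 2) * (nn + 1)) * (Cnv * wv - nn / (nn - 1)))
        * (nn * (nn - 1) / nn ^ 2 * s2 + (nn - 1) / nn ^ 2 * d)
      + nn / ((nn + 1) * (nn - 2)) * (Cnv * wv - nn / (nn - 1))
        * ((nn - 1) ^ 2 / nn ^ 2 * d + 2 * (nn - 1) / nn ^ 2 * s2) := by
  have h0 : (0:ℝ) < nn := by linarith
  have h1 : (0:ℝ) < nn - 1 := by linarith
  have h2 : (0:ℝ) < nn - 2 := by linarith
  have h3 : (0:ℝ) < nn + 1 := by linarith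
  have hid : ((nn / (nn - 1) - wv) ^ 2
          + nn * (nn - 3) / ((nn - 1) * (nn - 2) * (nn + 1)) * (Cnv * wv - nn / (nn - 1)))
        * (nn * (nn - 1) / nn ^ 2 * s2 + (nn - 1) / nn ^ 2 * d)
      + nn / ((nn + 1) * (nn - 2)) * (Cnv * wv - nn / (nn - 1))
        * ((nn - 1) ^ 2 / nn ^ 2 * d + 2 * (nn - 1) / nn ^ 2 * s2)
      = ((nn - 1) / nn * (nn / (nn - 1) - wv) ^ 2 + (Cnv * wv - nn / (nn - 1)) / nn) * s2
        + ((nn - 1) / nn ^ 2 * wv ^ 2 + (Cnv - 2) * wv / nn) * d := by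
    field_simp
    ring
  rw [hid]
  have := mul_nonneg (aux_cs nn Cnv wv hn hCn hw0 hw1) hs2
  linarith


lemma card_band (p τ : ℕ) (hτ1 : 1 ≤ τ) (hτp : τ ≤ p) (i : Fin p) :
    τ / 2 + 1 ≤ (Finset.univ.filter
      (fun j : Fin p => ((i : ℤ) - (j : ℤ)).natAbs ≤ τ / 2)).card := by
  have hip := i.isLt
  by_cases hcase : i.val + τ / 2 < p
  · have := Finset.card_le_card_of_injOn
      (f := fun k : Fin (τ / 2 + 1) => (⟨i.val + k.val, by omega⟩ : Fin p))
      (s := Finset.univ) (t := Finset.univ.filter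
        (fun j : Fin p => ((i : ℤ) - (j : ℤ)).natAbs ≤ τ / 2))
      (by intro k _
          simp only [Finset.mem_coe, Finset.mem_filter, Finset.mem_univ, true_and]
          have := k.isLt
          omega)
      (by intro a _ b _ hab
          have : i.val + a.val = i.val + b.val := congrArg Fin.val hab
          exact Fin.ext (by omega))
    simpa using this
  · have := Finset.card_le_card_of_injOn
      (f := fun k : Fin (τ / 2 + 1) => (⟨i.val - k.val, by omega⟩ : Fin p))
      (s := Finset.univ) (t := Finset.univ.filter
        (fun j : Fin p => ((i : ℤ) - (j : ℤ)).natAbs ≤ τ / 2))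
      (by intro k _
          simp only [Finset.mem_coe, Finset.mem_filter, Finset.mem_univ, true_and]
          have := k.isLt
          omega)
      (by intro a _ b _ hab
          have h1 : i.val - a.val = i.val - b.val := congrArg Fin.val hab
          have ha := a.isLt
          have hb := b.isLt
          exact Fin.ext (by omega))
    simpa using this

/-- Under (C.1)–(C.2) with generalized tapering weights and `2 ≤ C_n ≤ n`,
there is `C₀` with `R_c(τ) ≥ pτC_n/(C₀ n)` (using `σ_ii ≥ c > 0`), and
consequently, given the upper bound
`Var_n(τ) ≤ C₁(p²/n² + C_n²pτ²/n³ + C_n pτ/n²)`, there is `C` with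
`√Var_n(τ)/R_c(τ) ≤ C max(1/(τC_n), 1/√(np))`. -/
theorem stmt14 (c M₀ : ℝ) (hc : 0 < c) (hM₀ : 0 < M₀)
    (C₁ : ℝ) (hC₁ : 0 < C₁) :
    ∃ C₀ C : ℝ, 0 < C₀ ∧ 0 < C ∧
      ∀ (p n τ : ℕ), 3 ≤ n → n ≤ p → 1 ≤ τ → τ ≤ p →
      ∀ (Cn : ℝ), 2 ≤ Cn → Cn ≤ n →
      ∀ (S : Matrix (Fin p) (Fin p) ℝ), S.IsSymm →
        (∀ v : Fin p → ℝ, 0 ≤ ∑ i, ∑ j, v i * S i j * v j) →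
        (∀ v : Fin p → ℝ, ∑ i, ∑ j, v i * S i j * v j ≤ M₀ * ∑ i, v i ^ 2) →
        (∀ i : Fin p, c ≤ S i i) →
      ∀ (w : Fin p → Fin p → ℝ),
        (∀ i j : Fin p, ((i : ℤ) - (j : ℤ)).natAbs ≤ τ / 2 → w i j = 1) →
        (∀ i j : Fin p, (τ : ℤ) ≤ ((i : ℤ) - (j : ℤ)).natAbs → w i j = 0) →
        (∀ i j : Fin p, 0 ≤ w i j ∧ w i j ≤ 1) →
      ((p : ℝ) * τ * Cn / (C₀ * n) ≤ Rc p n Cn w S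
        ∧ ∀ V : ℝ, 0 ≤ V →
            V ≤ C₁ * ((p : ℝ) ^ 2 / (n : ℝ) ^ 2
                + Cn ^ 2 * p * (τ : ℝ) ^ 2 / (n : ℝ) ^ 3
                + Cn * p * τ / (n : ℝ) ^ 2) →
            Real.sqrt V / Rc p n Cn w S
              ≤ C * max (1 / ((τ : ℝ) * Cn)) (1 / Real.sqrt ((n : ℝ) * p))) := by
  refine ⟨6 / c ^ 2, 3 * (6 / c ^ 2) * Real.sqrt C₁, by positivity, by positivity, ?_⟩
  intro p n τ hn3 hnp hτ1 hτp Cn hCn2 hCnn S _hSymm _hPSD _hOp hdiag w hwin hwout hw01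
  have hnr : (3:ℝ) ≤ (n:ℝ) := by exact_mod_cast hn3
  have hnr0 : (0:ℝ) < n := by linarith
  have hpr : (3:ℝ) ≤ (p:ℝ) := by exact_mod_cast le_trans hn3 hnp
  have hτr : (1:ℝ) ≤ (τ:ℝ) := by exact_mod_cast hτ1
  have hCn0 : (0:ℝ) < Cn := by linarith
  -- diagonal positivity
  have hd : ∀ i j : Fin p, c ^ 2 ≤ S i i * S j j := by
    intro i j
    nlinarith [hdiag i, hdiag j, mul_nonneg (sub_nonneg.2 (hdiag i)) (sub_nonneg.2 (hdiag j))]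
  have hd0 : ∀ i j : Fin p, (0:ℝ) ≤ S i i * S j j := fun i j =>
    le_trans (by positivity) (hd i j)
  -- lower-bound function
  set LB : Fin p → Fin p → ℝ := fun i j =>
    (((n:ℝ) - 1) / (n:ℝ) ^ 2 * (w i j) ^ 2 + (Cn - 2) * (w i j) / (n:ℝ)) * (S i i * S j j)
    with hLB
  have hLB0 : ∀ i j, 0 ≤ LB i j := by
    intro i j
    have h1 := (hw01 i j).1
    apply mul_nonneg _ (hd0 i j)
    have : (0:ℝ) ≤ ((n:ℝ) - 1) / (n:ℝ) ^ 2 := div_nonneg (by linarith) (by positivity)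
    have h2 : (0:ℝ) ≤ (Cn - 2) * w i j / (n:ℝ) := by
      apply div_nonneg (mul_nonneg (by linarith) h1) hnr0.le
    exact add_nonneg (mul_nonneg this (sq_nonneg _)) h2
  have step1 : ∑ i : Fin p, ∑ j : Fin p, LB i j ≤ Rc p n Cn w S := by
    rw [Rc]
    refine Finset.sum_le_sum fun i _ => Finset.sum_le_sum fun j _ => ?_
    exact term_ge (n:ℝ) Cn (w i j) (S i j ^ 2) (S i i * S j j) hnr hCn2
      (hw01 i j).1 (hw01 i j).2 (sq_nonneg _) (hd0 i j)
  -- entries in the band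
  have hentry : ∀ i j : Fin p, ((i : ℤ) - (j : ℤ)).natAbs ≤ τ / 2 →
      Cn * c ^ 2 / (3 * (n:ℝ)) ≤ LB i j := by
    intro i j hij
    rw [hLB]
    simp only
    rw [hwin i j hij]
    have hco : Cn / (3 * (n:ℝ)) ≤ ((n:ℝ) - 1) / (n:ℝ) ^ 2 * 1 ^ 2 + (Cn - 2) * 1 / (n:ℝ) := by
      have heq2 : ((n:ℝ) - 1) / (n:ℝ) ^ 2 * 1 ^ 2 + (Cn - 2) * 1 / (n:ℝ)
          = (((n:ℝ) - 1) + (Cn - 2) * (n:ℝ)) / (n:ℝ) ^ 2 := by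
        field_simp
      rw [heq2, div_le_div_iff₀ (by positivity) (by positivity)]
      nlinarith
    calc Cn * c ^ 2 / (3 * (n:ℝ)) = Cn / (3 * (n:ℝ)) * c ^ 2 := by ring
      _ ≤ (((n:ℝ) - 1) / (n:ℝ) ^ 2 * 1 ^ 2 + (Cn - 2) * 1 / (n:ℝ)) * (S i i * S j j) := by
          apply mul_le_mul hco (hd i j) (by positivity)
          exact le_trans (by positivity) hco
  -- per-row lower bound
  have step2 : ∀ i : Fin p, ((τ:ℝ) / 2) * (Cn * c ^ 2 / (3 * (n:ℝ))) ≤ ∑ j : Fin p, LB i j := by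
    intro i
    set J := Finset.univ.filter (fun j : Fin p => ((i : ℤ) - (j : ℤ)).natAbs ≤ τ / 2) with hJ
    have h1 : ∑ j ∈ J, LB i j ≤ ∑ j : Fin p, LB i j :=
      Finset.sum_le_sum_of_subset_of_nonneg (Finset.filter_subset _ _)
        (fun j _ _ => hLB0 i j)
    have h2 : (J.card : ℝ) * (Cn * c ^ 2 / (3 * (n:ℝ))) ≤ ∑ j ∈ J, LB i j := by
      have := Finset.card_nsmul_le_sum J (LB i) (Cn * c ^ 2 / (3 * (n:ℝ)))
        (fun j hj => hentry i j (by simpa [hJ] using hj))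
      simpa [nsmul_eq_mul] using this
    have h3 : (τ:ℝ) / 2 ≤ (J.card : ℝ) := by
      have hcb := card_band p τ hτ1 hτp i
      have h5 : (τ:ℝ) ≤ 2 * ((τ / 2 + 1 : ℕ) : ℝ) := by
        have h6 : τ ≤ 2 * (τ / 2 + 1) := by omega
        exact_mod_cast h6
      have h4 : ((τ / 2 + 1 : ℕ) : ℝ) ≤ (J.card : ℝ) := Nat.cast_le.mpr hcb
      linarith
    calc ((τ:ℝ) / 2) * (Cn * c ^ 2 / (3 * (n:ℝ)))
        ≤ (J.card : ℝ) * (Cn * c ^ 2 / (3 * (n:ℝ))) := by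
          apply mul_le_mul_of_nonneg_right h3 (by positivity)
      _ ≤ ∑ j ∈ J, LB i j := h2
      _ ≤ ∑ j : Fin p, LB i j := h1
  have hmain : (p : ℝ) * τ * Cn / (6 / c ^ 2 * n) ≤ Rc p n Cn w S := by
    have h5 : (p:ℝ) * (((τ:ℝ) / 2) * (Cn * c ^ 2 / (3 * (n:ℝ))))
        ≤ ∑ i : Fin p, ∑ j : Fin p, LB i j := by
      have := Finset.card_nsmul_le_sum (Finset.univ : Finset (Fin p))
        (fun i => ∑ j : Fin p, LB i j) (((τ:ℝ) / 2) * (Cn * c ^ 2 / (3 * (n:ℝ))))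
        (fun i _ => step2 i)
      simpa [nsmul_eq_mul] using this
    have heq : (p : ℝ) * τ * Cn / (6 / c ^ 2 * n)
        = (p:ℝ) * (((τ:ℝ) / 2) * (Cn * c ^ 2 / (3 * (n:ℝ)))) := by
      field_simp
      ring
    rw [heq]
    exact le_trans h5 step1
  refine ⟨hmain, ?_⟩
  intro V hV0 hVub
  have hp0 : (0:ℝ) < p := by linarith
  have hτ0 : (0:ℝ) < τ := by linarith
  set M := max (1 / ((τ:ℝ) * Cn)) (1 / Real.sqrt ((n:ℝ) * p)) with hMdef
  have hM1 : 1 / ((τ:ℝ) * Cn) ≤ M := le_max_left _ _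
  have hM2 : 1 / Real.sqrt ((n:ℝ) * p) ≤ M := le_max_right _ _
  have hMpos : 0 < M := lt_of_lt_of_le (by positivity) hM1
  set K := (p:ℝ) * τ * Cn / (n:ℝ) with hK
  have hKpos : 0 < K := div_pos (mul_pos (mul_pos hp0 hτ0) hCn0) hnr0
  have hMsq1 : (1 / ((τ:ℝ) * Cn)) ^ 2 ≤ M ^ 2 := pow_le_pow_left₀ (by positivity) hM1 2
  have hnp0 : (0:ℝ) ≤ (n:ℝ) * (p:ℝ) := by positivity
  have hMsq2 : 1 / ((n:ℝ) * p) ≤ M ^ 2 := by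
    have hs : (1 / Real.sqrt ((n:ℝ) * p)) ^ 2 = 1 / ((n:ℝ) * p) := by
      rw [div_pow, one_pow, Real.sq_sqrt hnp0]
    rw [← hs]
    exact pow_le_pow_left₀ (by positivity) hM2 2
  have hτCn : (0:ℝ) < (τ:ℝ) * Cn := mul_pos hτ0 hCn0
  have hA : (p:ℝ) ^ 2 / (n:ℝ) ^ 2 ≤ M ^ 2 * K ^ 2 := by
    have he : (p:ℝ) ^ 2 / (n:ℝ) ^ 2 = (1 / ((τ:ℝ) * Cn)) ^ 2 * K ^ 2 := by
      rw [hK]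
      field_simp
    rw [he]
    exact mul_le_mul_of_nonneg_right hMsq1 (sq_nonneg K)
  have hB : Cn ^ 2 * p * (τ:ℝ) ^ 2 / (n:ℝ) ^ 3 ≤ M ^ 2 * K ^ 2 := by
    have he : Cn ^ 2 * p * (τ:ℝ) ^ 2 / (n:ℝ) ^ 3 = 1 / ((n:ℝ) * p) * K ^ 2 := by
      rw [hK]
      field_simp
    rw [he]
    exact mul_le_mul_of_nonneg_right hMsq2 (sq_nonneg K)
  have hD : Cn * p * (τ:ℝ) / (n:ℝ) ^ 2 ≤ M ^ 2 * K ^ 2 := by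
    have he : Cn * p * (τ:ℝ) / (n:ℝ) ^ 2 = 1 / ((p:ℝ) * τ * Cn) * K ^ 2 := by
      rw [hK]
      field_simp
    rw [he]
    refine mul_le_mul_of_nonneg_right ?_ (sq_nonneg K)
    have hnple : (n:ℝ) ≤ (p:ℝ) := by exact_mod_cast hnp
    rcases le_total ((τ:ℝ) * Cn) (n:ℝ) with h | h
    · refine le_trans ?_ hMsq1
      rw [div_pow, one_pow]
      refine one_div_le_one_div_of_le (by positivity) ?_
      have h7 : (τ:ℝ) * Cn * ((τ:ℝ) * Cn) ≤ (τ:ℝ) * Cn * (p:ℝ) :=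
        mul_le_mul_of_nonneg_left (le_trans h hnple) hτCn.le
      calc ((τ:ℝ) * Cn) ^ 2 = (τ:ℝ) * Cn * ((τ:ℝ) * Cn) := by ring
        _ ≤ (τ:ℝ) * Cn * (p:ℝ) := h7
        _ = (p:ℝ) * τ * Cn := by ring
    · refine le_trans ?_ hMsq2
      refine one_div_le_one_div_of_le (by positivity) ?_
      have h7 : (p:ℝ) * (n:ℝ) ≤ (p:ℝ) * ((τ:ℝ) * Cn) :=
        mul_le_mul_of_nonneg_left h hp0.le
      calc (n:ℝ) * (p:ℝ) = (p:ℝ) * (n:ℝ) := by ring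
        _ ≤ (p:ℝ) * ((τ:ℝ) * Cn) := h7
        _ = (p:ℝ) * τ * Cn := by ring
  have hV2 : V ≤ C₁ * (3 * (M ^ 2 * K ^ 2)) :=
    le_trans hVub (mul_le_mul_of_nonneg_left (by linarith) hC₁.le)
  have hL : 0 < (p:ℝ) * τ * Cn / (6 / c ^ 2 * n) := by
    apply div_pos (mul_pos (mul_pos hp0 hτ0) hCn0)
    positivity
  have hRc : 0 < Rc p n Cn w S := lt_of_lt_of_le hL hmain
  rw [div_le_iff₀ hRc]
  have hCML : 3 * (6 / c ^ 2) * Real.sqrt C₁ * M * ((p:ℝ) * τ * Cn / (6 / c ^ 2 * n))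
      = 3 * Real.sqrt C₁ * (M * K) := by
    rw [hK]
    field_simp
  have hsq : Real.sqrt V ≤ 3 * Real.sqrt C₁ * (M * K) := by
    have h9 : V ≤ (3 * Real.sqrt C₁ * (M * K)) ^ 2 := by
      have he : (3 * Real.sqrt C₁ * (M * K)) ^ 2 = 9 * C₁ * (M ^ 2 * K ^ 2) := by
        rw [mul_pow, mul_pow, mul_pow, Real.sq_sqrt hC₁.le]
        ring
      rw [he]
      have h8 : (0:ℝ) ≤ C₁ * (M ^ 2 * K ^ 2) :=
        mul_nonneg hC₁.le (mul_nonneg (sq_nonneg M) (sq_nonneg K))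
      linarith
    calc Real.sqrt V ≤ Real.sqrt ((3 * Real.sqrt C₁ * (M * K)) ^ 2) := Real.sqrt_le_sqrt h9
      _ = 3 * Real.sqrt C₁ * (M * K) := Real.sqrt_sq (by positivity)
  calc Real.sqrt V ≤ 3 * Real.sqrt C₁ * (M * K) := hsq
    _ = 3 * (6 / c ^ 2) * Real.sqrt C₁ * M * ((p:ℝ) * τ * Cn / (6 / c ^ 2 * n)) := hCML.symm
    _ ≤ 3 * (6 / c ^ 2) * Real.sqrt C₁ * M * Rc p n Cn w S := by
        refine mul_le_mul_of_nonneg_left hmain ?_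
        have : (0:ℝ) ≤ 3 * (6 / c ^ 2) * Real.sqrt C₁ := by positivity
        exact mul_nonneg this hMpos.le
end
end

section
/- Under (C.1), (C.3), (C.4), (C.5) with banding weights $\omega_{ij}^{(\tau)} = \mathbf{1}(|i-j| < \tau)$, let $\tau_0$ be the unique minimizer of $R(\tau) = \sum_{|i-j|<\tau}(\frac{1}{n}\sigma_{ij}^2 + \frac{n-1}{n^2}\sigma_{ii}\sigma_{jj}) + \sum_{|i-j|\ge\tau}\sigma_{ij}^2$. Then $\sum_{|i-j|=\tau_0}\sigma_{ij}^2 < \sum_{|i-j|=\tau_0}\frac{1}{n}\sigma_{ii}\sigma_{jj}$ and $\sum_{|i-j|=\tau_0}\frac{1}{n}\sigma_{ii}\sigma_{jj} < \sum_{|i-j|=\tau_0-1}\sigma_{ij}^2$; moreover, under the decay condition $|\sigma_{ij}| \le M_1|i-j|^{-(\alpha+1)}$, there exists $C$ such that $\tau_0 \le C n^{1/(2(\alpha+1))}$. -/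
open Finset

noncomputable section

/-- The banding Frobenius risk `R(τ)`. -/
def bandRisk (p n : ℕ) (S : Matrix (Fin p) (Fin p) ℝ) (τ : ℕ) : ℝ :=
  ∑ i : Fin p, ∑ j : Fin p,
    if ((i : ℤ) - (j : ℤ)).natAbs < τ
    then (1 / (n : ℝ)) * S i j ^ 2 + ((n : ℝ) - 1) / (n : ℝ) ^ 2 * (S i i * S j j)
    else S i j ^ 2


lemma count_row (p k : ℕ) (hk : 1 ≤ k) :
    ∑ j ∈ Finset.range p, (if ((j:ℤ) - (p:ℤ)).natAbs = k then (1:ℝ) else 0)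
      = if k ≤ p then 1 else 0 := by
  by_cases h : k ≤ p
  · rw [if_pos h, Finset.sum_eq_single (p - k)
      (fun j hj hne => by
        rw [if_neg]
        have := Finset.mem_range.mp hj
        omega)
      (fun h' => absurd (Finset.mem_range.mpr (by omega)) h'),
      if_pos (by omega)]
  · rw [if_neg h, Finset.sum_eq_zero]
    intro j hj
    have := Finset.mem_range.mp hj
    rw [if_neg]
    omega

lemma count_range (p k : ℕ) (hk : 1 ≤ k) :
    ∑ i ∈ Finset.range p, ∑ j ∈ Finset.range p,
        (if ((i:ℤ) - (j:ℤ)).natAbs = k then (1:ℝ) else 0)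
      = 2 * ((p - k : ℕ) : ℝ) := by
  induction p with
  | zero => simp
  | succ p ih =>
    have hsw : ∑ j ∈ Finset.range p, (if ((p:ℤ) - (j:ℤ)).natAbs = k then (1:ℝ) else 0)
        = if k ≤ p then 1 else 0 := by
      rw [← count_row p k hk]
      refine Finset.sum_congr rfl fun j _ => ?_
      have h : ((p:ℤ) - (j:ℤ)).natAbs = ((j:ℤ) - (p:ℤ)).natAbs := by omega
      rw [h]
    simp only [Finset.sum_range_succ]
    rw [Finset.sum_add_distrib, ih, count_row p k hk, hsw,
      if_neg (show ¬(((p:ℤ) - (p:ℤ)).natAbs = k) by omega)]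
    by_cases hkp : k ≤ p
    · rw [if_pos hkp, show p + 1 - k = (p - k) + 1 from by omega]
      push_cast
      ring
    · rw [if_neg hkp, show p - k = 0 from by omega, show p + 1 - k = 0 from by omega]
      norm_num

lemma count_fin (p k : ℕ) (hk : 1 ≤ k) :
    ∑ i : Fin p, ∑ j : Fin p,
        (if ((i:ℤ) - (j:ℤ)).natAbs = k then (1:ℝ) else 0)
      = 2 * ((p - k : ℕ) : ℝ) := by
  rw [← count_range p k hk]
  have inner : ∀ m : ℕ,
      (∑ j : Fin p, (if ((m:ℤ) - (j:ℤ)).natAbs = k then (1:ℝ) else 0))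
        = ∑ j ∈ Finset.range p, (if ((m:ℤ) - (j:ℤ)).natAbs = k then (1:ℝ) else 0) :=
    fun m => Fin.sum_univ_eq_sum_range (fun j => if ((m:ℤ) - (j:ℤ)).natAbs = k then (1:ℝ) else 0) p
  simp_rw [inner]
  exact Fin.sum_univ_eq_sum_range
    (fun m => ∑ j ∈ Finset.range p, (if ((m:ℤ) - (j:ℤ)).natAbs = k then (1:ℝ) else 0)) p

lemma risk_diff (p n : ℕ) (S : Matrix (Fin p) (Fin p) ℝ) (τ : ℕ) :
    bandRisk p n S (τ+1) - bandRisk p n S τ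
      = ∑ i : Fin p, ∑ j : Fin p,
          if ((i:ℤ) - (j:ℤ)).natAbs = τ
          then ((1/(n:ℝ)) * S i j ^ 2 + ((n:ℝ)-1)/(n:ℝ)^2 * (S i i * S j j) - S i j ^ 2)
          else 0 := by
  unfold bandRisk
  rw [← Finset.sum_sub_distrib]
  refine Finset.sum_congr rfl fun i _ => ?_
  rw [← Finset.sum_sub_distrib]
  refine Finset.sum_congr rfl fun j _ => ?_
  rcases lt_trichotomy (((i:ℤ)-(j:ℤ)).natAbs) τ with h|h|h
  · rw [if_pos (by omega), if_pos h, if_neg (by omega)]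
    ring
  · rw [if_pos (by omega), if_neg (by omega), if_pos h]
  · rw [if_neg (by omega), if_neg (by omega), if_neg (by omega)]
    ring

lemma main_diff (p n : ℕ) (hn : (n:ℝ) ≠ 0) (S : Matrix (Fin p) (Fin p) ℝ) (τ : ℕ) :
    bandRisk p n S (τ+1) - bandRisk p n S τ
      = ((n:ℝ)-1)/(n:ℝ) *
        ((∑ i : Fin p, ∑ j : Fin p,
            if ((i:ℤ)-(j:ℤ)).natAbs = τ then (1/(n:ℝ)) * (S i i * S j j) else 0)
          - ∑ i : Fin p, ∑ j : Fin p,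
              if ((i:ℤ)-(j:ℤ)).natAbs = τ then S i j ^ 2 else 0) := by
  rw [risk_diff]
  rw [← Finset.sum_sub_distrib, Finset.mul_sum]
  refine Finset.sum_congr rfl fun i _ => ?_
  rw [← Finset.sum_sub_distrib, Finset.mul_sum]
  refine Finset.sum_congr rfl fun j _ => ?_
  by_cases h : ((i:ℤ)-(j:ℤ)).natAbs = τ
  · rw [if_pos h, if_pos h, if_pos h]
    field_simp
    ring
  · rw [if_neg h, if_neg h, if_neg h]
    ring

/-- Under (C.3)–(C.5), if `τ₀` is the unique minimizer of the banding risk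
`R(τ)` over `{1,…,p}`, then
`∑_{|i-j|=τ₀} σ_ij² < ∑_{|i-j|=τ₀} σ_ii σ_jj / n < ∑_{|i-j|=τ₀-1} σ_ij²`,
and there is a constant `C` (depending only on the class parameters) with
`τ₀ ≤ C n^{1/(2(α+1))}`. -/
theorem stmt19 (M₀ M₁ α γ : ℝ) (hM₀ : 0 < M₀) (hM₁ : 0 < M₁) (hα : 0 < α)
    (hγ : 1 < γ) :
    ∃ C : ℝ, 0 < C ∧
      ∀ (n p τ₀ : ℕ), 2 ≤ n → n ≤ p → 1 ≤ τ₀ → τ₀ < p →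
      ∀ (S : Matrix (Fin p) (Fin p) ℝ), S.IsSymm →
        (∀ v : Fin p → ℝ, 0 ≤ ∑ i, ∑ j, v i * S i j * v j) →
        (∀ v : Fin p → ℝ, ∑ i, ∑ j, v i * S i j * v j ≤ M₀ * ∑ i, v i ^ 2) →
        (∀ i j : Fin p, i ≠ j →
            |S i j| ≤ M₁ * ((((i : ℤ) - (j : ℤ)).natAbs : ℝ)) ^ (-(α + 1))) →
        (∀ k : ℕ,
            γ * (∑ i : Fin p, ∑ j : Fin p,
                if ((i : ℤ) - (j : ℤ)).natAbs = k + 1 then S i j ^ 2 else 0)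
              ≤ ∑ i : Fin p, ∑ j : Fin p,
                  if ((i : ℤ) - (j : ℤ)).natAbs = k then S i j ^ 2 else 0) →
        (∀ i : Fin p, S i i = 1) →
        (∀ τ : ℕ, 1 ≤ τ → τ ≤ p → τ ≠ τ₀ →
            bandRisk p n S τ₀ < bandRisk p n S τ) →
        ((∑ i : Fin p, ∑ j : Fin p,
            if ((i : ℤ) - (j : ℤ)).natAbs = τ₀ then S i j ^ 2 else 0)
          < ∑ i : Fin p, ∑ j : Fin p,
              if ((i : ℤ) - (j : ℤ)).natAbs = τ₀
              then (1 / (n : ℝ)) * (S i i * S j j) else 0)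
        ∧ ((∑ i : Fin p, ∑ j : Fin p,
            if ((i : ℤ) - (j : ℤ)).natAbs = τ₀
            then (1 / (n : ℝ)) * (S i i * S j j) else 0)
          < ∑ i : Fin p, ∑ j : Fin p,
              if ((i : ℤ) - (j : ℤ)).natAbs = τ₀ - 1 then S i j ^ 2 else 0)
        ∧ (τ₀ : ℝ) ≤ C * (n : ℝ) ^ ((1 : ℝ) / (2 * (α + 1))) := by
  refine ⟨M₁ ^ ((1:ℝ)/(α+1)) + 1, by positivity, ?_⟩
  intro n p τ₀ hn hnp hτ1 hτp S hsymm hpsd hmax hdecay hγcond hdiag hmin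
  obtain ⟨k, rfl⟩ : ∃ k, τ₀ = k + 1 := ⟨τ₀ - 1, by omega⟩
  have hn0 : (0:ℝ) < n := by
    have : 0 < n := by omega
    exact_mod_cast this
  have hnne : (n:ℝ) ≠ 0 := ne_of_gt hn0
  have hn2 : (2:ℝ) ≤ n := by exact_mod_cast hn
  have hc : 0 < ((n:ℝ)-1)/(n:ℝ) := by
    apply div_pos <;> linarith
  -- M sums equal count/n
  have hM : ∀ m : ℕ, 1 ≤ m →
      (∑ i : Fin p, ∑ j : Fin p,
        if ((i:ℤ)-(j:ℤ)).natAbs = m then (1/(n:ℝ)) * (S i i * S j j) else 0)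
      = (1/(n:ℝ)) * (2 * ((p - m : ℕ) : ℝ)) := by
    intro m hm
    rw [← count_fin p m hm, Finset.mul_sum]
    refine Finset.sum_congr rfl fun i _ => ?_
    rw [Finset.mul_sum]
    refine Finset.sum_congr rfl fun j _ => ?_
    by_cases h : ((i:ℤ)-(j:ℤ)).natAbs = m
    · rw [if_pos h, if_pos h, hdiag i, hdiag j]
      ring
    · rw [if_neg h, if_neg h, mul_zero]
  -- Part 1
  have hpos := sub_pos.mpr (hmin (k+1+1) (by omega) (by omega) (by omega))
  rw [main_diff p n hnne S (k+1)] at hpos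
  have first :
      (∑ i : Fin p, ∑ j : Fin p,
          if ((i:ℤ)-(j:ℤ)).natAbs = k+1 then S i j ^ 2 else 0)
        < ∑ i : Fin p, ∑ j : Fin p,
            if ((i:ℤ)-(j:ℤ)).natAbs = k+1 then (1/(n:ℝ)) * (S i i * S j j) else 0 := by
    rcases mul_pos_iff.mp hpos with ⟨_, h⟩ | ⟨h, _⟩
    · linarith
    · linarith
  refine ⟨first, ?_⟩
  have hne1 : (1:ℝ) ≤ (n:ℝ) ^ ((1:ℝ)/(2*(α+1))) := by
    nth_rewrite 1 [show (1:ℝ) = (1:ℝ) ^ ((1:ℝ)/(2*(α+1))) from (Real.one_rpow _).symm]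
    exact Real.rpow_le_rpow zero_le_one (le_trans one_le_two hn2) (by positivity)
  rcases Nat.eq_zero_or_pos k with rfl | hk1
  · -- τ₀ = 1
    constructor
    · -- M(1) < D(0)
      have hD0 : (∑ i : Fin p, ∑ j : Fin p,
          if ((i:ℤ)-(j:ℤ)).natAbs = 0+1-1 then S i j ^ 2 else 0) = (p:ℝ) := by
        have h1 : ∀ i : Fin p,
            (∑ j : Fin p, if ((i:ℤ)-(j:ℤ)).natAbs = 0+1-1 then S i j ^ 2 else 0) = 1 := by
          intro i
          rw [Finset.sum_eq_single i
            (fun j _ hj => by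
              rw [if_neg]
              intro hcon
              exact hj (Fin.ext (by omega)))
            (fun h => absurd (Finset.mem_univ i) h)]
          rw [if_pos (by omega), hdiag i]
          norm_num
        rw [Finset.sum_congr rfl (fun i _ => h1 i), Finset.sum_const, Finset.card_univ,
          Fintype.card_fin, nsmul_eq_mul, mul_one]
      rw [hD0, hM (0+1) (by omega)]
      have hcast : ((p - (0+1) : ℕ) : ℝ) = (p:ℝ) - 1 := by
        have : (1:ℕ) ≤ p := by omega
        push_cast [Nat.cast_sub this]
        ring
      rw [hcast]
      have hpR : (2:ℝ) ≤ p := by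
        have : (2:ℕ) ≤ p := by omega
        exact_mod_cast this
      have h2 : (1/(n:ℝ)) ≤ 1/2 := by
        apply one_div_le_one_div_of_le <;> linarith
      have := mul_le_mul_of_nonneg_right h2 (show (0:ℝ) ≤ 2 * ((p:ℝ) - 1) by linarith)
      linarith
    · -- 1 ≤ C * n^e
      push_cast
      have hMp : (0:ℝ) < M₁ ^ ((1:ℝ)/(α+1)) := Real.rpow_pos_of_pos hM₁ _
      calc (1:ℝ) = 1 * 1 := by ring
        _ ≤ (M₁ ^ ((1:ℝ)/(α+1)) + 1) * (n:ℝ) ^ ((1:ℝ)/(2*(α+1))) :=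
            mul_le_mul (by linarith) hne1 zero_le_one (by linarith)
  · -- k ≥ 1
    have hneg := sub_neg.mpr (hmin k (by omega) (by omega) (by omega))
    rw [main_diff p n hnne S k, hM k hk1] at hneg
    have hMDk : (1/(n:ℝ)) * (2 * ((p - k : ℕ) : ℝ))
        < ∑ i : Fin p, ∑ j : Fin p,
            if ((i:ℤ)-(j:ℤ)).natAbs = k then S i j ^ 2 else 0 := by
      rcases mul_neg_iff.mp hneg with ⟨_, h⟩ | ⟨h, _⟩
      · linarith
      · linarith
    constructor
    · -- part 2
      simp only [Nat.add_sub_cancel]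
      rw [hM (k+1) (by omega)]
      have hmono : ((p - (k+1) : ℕ) : ℝ) ≤ ((p - k : ℕ) : ℝ) := by
        exact_mod_cast Nat.sub_le_sub_left (Nat.le_succ k) p
      have h1n : (0:ℝ) ≤ 1/(n:ℝ) := by positivity
      have := mul_le_mul_of_nonneg_left
        (show 2 * ((p - (k+1) : ℕ) : ℝ) ≤ 2 * ((p - k : ℕ) : ℝ) by linarith) h1n
      linarith
    · -- part 3
      have hk0 : (0:ℝ) < (k:ℝ) := by exact_mod_cast hk1
      have hDle : (∑ i : Fin p, ∑ j : Fin p,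
            if ((i:ℤ)-(j:ℤ)).natAbs = k then S i j ^ 2 else 0)
          ≤ (M₁ * (k:ℝ) ^ (-(α+1))) ^ 2 * (2 * ((p - k : ℕ) : ℝ)) := by
        calc (∑ i : Fin p, ∑ j : Fin p,
              if ((i:ℤ)-(j:ℤ)).natAbs = k then S i j ^ 2 else 0)
            ≤ ∑ i : Fin p, ∑ j : Fin p,
              (if ((i:ℤ)-(j:ℤ)).natAbs = k then (M₁ * (k:ℝ) ^ (-(α+1))) ^ 2 else 0) := by
              refine Finset.sum_le_sum fun i _ => Finset.sum_le_sum fun j _ => ?_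
              by_cases h : ((i:ℤ)-(j:ℤ)).natAbs = k
              · rw [if_pos h, if_pos h]
                have hij : i ≠ j := by
                  intro e
                  rw [e] at h
                  simp at h
                  omega
                have hd := hdecay i j hij
                rw [h] at hd
                calc S i j ^ 2 = |S i j| ^ 2 := (sq_abs _).symm
                  _ ≤ (M₁ * (k:ℝ) ^ (-(α+1))) ^ 2 := by
                      apply pow_le_pow_left₀ (abs_nonneg _) hd
              · rw [if_neg h, if_neg h]
          _ = (M₁ * (k:ℝ) ^ (-(α+1))) ^ 2 * (2 * ((p - k : ℕ) : ℝ)) := by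
              rw [← count_fin p k hk1, Finset.mul_sum]
              refine Finset.sum_congr rfl fun i _ => ?_
              rw [Finset.mul_sum]
              refine Finset.sum_congr rfl fun j _ => ?_
              by_cases h : ((i:ℤ)-(j:ℤ)).natAbs = k
              · rw [if_pos h, if_pos h, mul_one]
              · rw [if_neg h, if_neg h, mul_zero]
      have hX : (0:ℝ) < 2 * ((p - k : ℕ) : ℝ) := by
        have : (1:ℝ) ≤ ((p - k : ℕ) : ℝ) := by
          have : (1:ℕ) ≤ p - k := by omega
          exact_mod_cast this
        linarith
      have hlt : 1/(n:ℝ) * (2 * ((p - k : ℕ) : ℝ))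
          < (M₁ * (k:ℝ) ^ (-(α+1))) ^ 2 * (2 * ((p - k : ℕ) : ℝ)) := lt_of_lt_of_le hMDk hDle
      have hlt2 : 1/(n:ℝ) < (M₁ * (k:ℝ) ^ (-(α+1))) ^ 2 := (mul_lt_mul_iff_left₀ hX).mp hlt
      have hy : ((k:ℝ) ^ (-(α+1))) ^ 2 = ((k:ℝ) ^ (2*(α+1)))⁻¹ := by
        rw [← Real.rpow_natCast ((k:ℝ) ^ (-(α+1))) 2, ← Real.rpow_mul hk0.le,
          show (-(α+1)) * ((2:ℕ):ℝ) = -(2*(α+1)) by push_cast; ring,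
          Real.rpow_neg hk0.le]
      rw [mul_pow, hy, ← div_eq_mul_inv] at hlt2
      have hA : (0:ℝ) < (k:ℝ) ^ (2*(α+1)) := Real.rpow_pos_of_pos hk0 _
      rw [div_lt_div_iff₀ hn0 hA] at hlt2
      -- hlt2 : 1 * k^(2(α+1)) < M₁^2 * n
      have hAn : (k:ℝ) ^ (2*(α+1)) < (n:ℝ) * M₁ ^ 2 := by linarith
      have he : (0:ℝ) < 1/(2*(α+1)) := by positivity
      have h1 : (k:ℝ) = ((k:ℝ) ^ (2*(α+1))) ^ ((1:ℝ)/(2*(α+1))) := by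
        rw [← Real.rpow_mul hk0.le, mul_one_div, div_self (show (2*(α+1)) ≠ 0 by positivity),
          Real.rpow_one]
      have hkle : (k:ℝ) ≤ (n:ℝ) ^ ((1:ℝ)/(2*(α+1))) * M₁ ^ ((1:ℝ)/(α+1)) := by
        rw [h1]
        have h2 : ((k:ℝ) ^ (2*(α+1))) ^ ((1:ℝ)/(2*(α+1)))
            ≤ ((n:ℝ) * M₁ ^ 2) ^ ((1:ℝ)/(2*(α+1))) :=
          Real.rpow_le_rpow hA.le hAn.le he.le
        refine h2.trans_eq ?_
        rw [Real.mul_rpow hn0.le (by positivity)]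
        congr 1
        rw [← Real.rpow_natCast M₁ 2, ← Real.rpow_mul hM₁.le,
          show ((2:ℕ):ℝ) * ((1:ℝ)/(2*(α+1))) = (1:ℝ)/(α+1) by
            push_cast
            have : (α+1) ≠ 0 := by positivity
            field_simp]
      push_cast
      nlinarith [hkle, hne1]

end
end
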